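/- For every preference default theory form : ι → L.Sentence, the set of accepted conclusions is consistent: the theory lfp(C) ∪ SPO is satisfiable. (Proposition 3 of the paper.) -/

import Mathlib

open FirstOrder Language

namespace Brevis

/-- The base language with a single binary relation symbol `R`. -/
def baseLang : Language where
  Functions := fun _ => Empty
  Relations := fun n => match n with
    | 2 => Unit
    | _ => Empty

/-- The binary relation symbol `R` of `baseLang`. -/
def Rsym : baseLang.Relations 2 := Unit.unit

/-- The base language with a binary relation symbol `R` and one 0-ary relation symbol `P`. -/
def baseLangP : Language where
  Functions := fun _ => Empty
  Relations := fun n => match n with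
    | 0 => Unit
    | 2 => Unit
    | _ => Empty

/-- The binary relation symbol `R` of `baseLangP`. -/
def RsymP : baseLangP.Relations 2 := Unit.unit

/-- The 0-ary relation symbol `P` of `baseLangP`. -/
def Psym : baseLangP.Relations 0 := Unit.unit

/-- The atomic sentence `p` given by the propositional symbol `P`. -/
def pSent (ι : Type) : (baseLangP[[ι]]).Sentence :=
  Relations.formula (Sum.inl Psym) ![]

variable (L₀ : FirstOrder.Language.{0, 0}) (R : L₀.Relations 2) (ι : Type) [Fintype ι]

/-- The atomic sentence `d < d'`, i.e. `R (c_d) (c_d')`. -/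
def ltSent (d d' : ι) : (L₀[[ι]]).Sentence :=
  Relations.boundedFormula₂ (Sum.inl R) (L₀.con d).term (L₀.con d').term

/-- The theory `SPO` asserting that `R` is a strict partial order (irreflexive and transitive). -/
def spo : (L₀[[ι]]).Theory :=
  {Relations.irreflexive (Sum.inl R), Relations.transitive (Sum.inl R)}

/-- A set of sentences is consistent iff together with `SPO` it is satisfiable. -/
def Consistent (S : (L₀[[ι]]).Theory) : Prop :=
  Theory.IsSatisfiable (S ∪ spo L₀ R ι)

open scoped Classical in
/-- The extension base `B(e)` determined by the linear order `e` on the names. -/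
noncomputable def base (e : LinearOrder ι) (form : ι → (L₀[[ι]]).Sentence) :
    (L₀[[ι]]).Theory :=
  letI := e
  (Finset.univ.sort (· ≤ · : ι → ι → Prop)).foldl
    (fun B d => if Consistent L₀ R ι (B ∪ {form d}) then B ∪ {form d} else B) ∅

/-- The deductive closure (modulo `SPO`) of a set of sentences:
all sentences satisfied in every model of `S ∪ SPO`. -/
def closure (S : (L₀[[ι]]).Theory) : Set (L₀[[ι]]).Sentence :=
  {φ | (S ∪ spo L₀ R ι) ⊨ᵇ φ}

/-- The extension `E(e)` generated by the linear order `e`. -/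
noncomputable def extension (e : LinearOrder ι) (form : ι → (L₀[[ι]]).Sentence) :
    Set (L₀[[ι]]).Sentence :=
  closure L₀ R ι (base L₀ R ι e form)

/-- A strict partial order `p` on the names is compatible with `S` iff
`S ∪ SPO ∪ {d < d' | p d d'} ∪ {¬ (d < d') | ¬ p d d'}` is satisfiable. -/
def Compatible (p : ι → ι → Prop) (S : (L₀[[ι]]).Theory) : Prop :=
  Theory.IsSatisfiable
    (S ∪ spo L₀ R ι ∪ {φ | ∃ d d', p d d' ∧ φ = ltSent L₀ R ι d d'} ∪
      {φ | ∃ d d', ¬ p d d' ∧ φ = ∼(ltSent L₀ R ι d d')})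

/-- `Exts form S`: the set of extensions `E(e)` where `e` is a linear order extending some
strict partial order compatible with `S`. -/
def Exts (form : ι → (L₀[[ι]]).Sentence) (S : (L₀[[ι]]).Theory) :
    Set (Set (L₀[[ι]]).Sentence) :=
  {E | ∃ (e : LinearOrder ι) (p : ι → ι → Prop), IsStrictOrder ι p ∧
    Compatible L₀ R ι p S ∧ (∀ d d', p d d' → e.lt d d') ∧ E = extension L₀ R ι e form}

/-- The operator `C`. -/
def C (form : ι → (L₀[[ι]]).Sentence) (S : (L₀[[ι]]).Theory) : (L₀[[ι]]).Theory :=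
  ⋂₀ Exts L₀ R ι form S

/-- The least fixed point of `C` (Knaster–Tarski): the set of accepted conclusions. -/
def lfpC (form : ι → (L₀[[ι]]).Sentence) : (L₀[[ι]]).Theory :=
  sInf {S | C L₀ R ι form S ⊆ S}


section Aux

variable {L₀ : FirstOrder.Language.{0, 0}} {R : L₀.Relations 2} {ι : Type} [Fintype ι]

/-- The trivial structure on `Unit` for any language. -/
def unitStruct (L : Language) : L.Structure Unit :=
  ⟨fun _ _ => (), fun _ _ => False⟩

lemma spo_satisfiable : (spo L₀ R ι).IsSatisfiable := by
  letI : (L₀[[ι]]).Structure Unit := unitStruct _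
  have hM : Unit ⊨ spo L₀ R ι := by
    rw [Theory.model_iff]
    intro φ hφ
    rcases hφ with h | h
    · subst h
      refine (Relations.realize_irreflexive (L := L₀[[ι]]) (M := Unit) (r := Sum.inl R)).2 ⟨?_⟩
      intro x hx
      exact hx
    · rcases h with rfl
      refine (Relations.realize_transitive (L := L₀[[ι]]) (M := Unit) (r := Sum.inl R)).2 ⟨?_⟩
      intro a b c hab _
      exact hab.elim
  exact Theory.Model.isSatisfiable Unit

lemma base_consistent (e : LinearOrder ι) (form : ι → (L₀[[ι]]).Sentence) :
    Consistent L₀ R ι (base L₀ R ι e form) := by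
  classical
  have main : ∀ (l : List ι) (B : (L₀[[ι]]).Theory), Consistent L₀ R ι B →
      Consistent L₀ R ι (l.foldl
        (fun B d => if Consistent L₀ R ι (B ∪ {form d}) then B ∪ {form d} else B) B) := by
    intro l
    induction l with
    | nil => intro B hB; exact hB
    | cons d l ih =>
      intro B hB
      simp only [List.foldl_cons]
      apply ih
      split
      · assumption
      · exact hB
  have h0 : Consistent L₀ R ι (∅ : (L₀[[ι]]).Theory) := by
    rw [Consistent, Set.empty_union]
    exact spo_satisfiable
  exact main _ _ h0

lemma ltSent_strictOrder {M : Type*} [(L₀[[ι]]).Structure M]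
    (hi : Sentence.Realize (L := L₀[[ι]]) M (Relations.irreflexive (Sum.inl R)))
    (ht : Sentence.Realize (L := L₀[[ι]]) M (Relations.transitive (Sum.inl R))) :
    IsStrictOrder ι (fun d d' => Sentence.Realize M (ltSent L₀ R ι d d')) := by
  replace hi := ((Relations.realize_irreflexive (L := L₀[[ι]]) (M := M) (r := Sum.inl R)).1 hi).irrefl
  replace ht := ((Relations.realize_transitive (L := L₀[[ι]]) (M := M) (r := Sum.inl R)).1 ht).trans
  have h1 : ∀ a, ¬ Sentence.Realize M (ltSent L₀ R ι a a) := by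
    intro a ha
    simp only [ltSent, Sentence.Realize, Formula.Realize,
      BoundedFormula.realize_rel₂] at ha
    exact hi _ ((BoundedFormula.realize_rel₂ (L := L₀[[ι]]) (M := M)).1 ha)
  have h2 : ∀ a b c, Sentence.Realize M (ltSent L₀ R ι a b) →
      Sentence.Realize M (ltSent L₀ R ι b c) → Sentence.Realize M (ltSent L₀ R ι a c) := by
    intro a b c hab hbc
    simp only [ltSent, Sentence.Realize, Formula.Realize,
      BoundedFormula.realize_rel₂] at hab hbc ⊢
    exact (BoundedFormula.realize_rel₂ (L := L₀[[ι]]) (M := M)).2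
      (ht _ _ _ ((BoundedFormula.realize_rel₂ (L := L₀[[ι]]) (M := M)).1 hab)
        ((BoundedFormula.realize_rel₂ (L := L₀[[ι]]) (M := M)).1 hbc))
  exact { irrefl := h1, trans := h2 }

/-- Any strict (partial) order on `ι` extends to a linear order. -/
lemma exists_linear_ext (p : ι → ι → Prop) (hp : IsStrictOrder ι p) :
    ∃ e : LinearOrder ι, ∀ a b, p a b → e.lt a b := by
  classical
  haveI := hp
  let r : ι → ι → Prop := fun a b => p a b ∨ a = b
  haveI hr : IsPartialOrder ι r :=
    { refl := fun a => Or.inr rfl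
      trans := by
        intro a b c hab hbc
        rcases hab with hab | rfl
        · rcases hbc with hbc | rfl
          · exact Or.inl (_root_.trans hab hbc)
          · exact Or.inl hab
        · exact hbc
      antisymm := by
        intro a b hab hba
        rcases hab with hab | rfl
        · rcases hba with hba | rfl
          · exact absurd (_root_.trans hab hba) (irrefl _)
          · exact absurd hab (irrefl _)
        · rfl }
  obtain ⟨s, hs, hrs⟩ := extend_partialOrder r
  haveI := hs
  let q : ι → ι → Prop := fun a b => s a b ∧ ¬s b a
  haveI hq : IsStrictTotalOrder ι q :=
    { trichotomous := by
        intro a b hnab hnba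
        rcases hs.total a b with hab | hba
        · by_cases h : s b a
          · exact hs.antisymm _ _ hab h
          · exact absurd ⟨hab, h⟩ hnab
        · by_cases h : s a b
          · exact hs.antisymm _ _ h hba
          · exact absurd ⟨hba, h⟩ hnba
      irrefl := fun a h => h.2 h.1
      trans := fun a b c hab hbc =>
        ⟨_root_.trans hab.1 hbc.1, fun hca => hbc.2 (_root_.trans hca hab.1)⟩ }
  refine ⟨linearOrderOfSTO q, fun a b hab => ?_⟩
  show q a b
  have hsab : s a b := hrs a b (Or.inl hab)
  refine ⟨hsab, fun hba => ?_⟩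
  have : a = b := hs.antisymm _ _ hsab hba
  subst this
  exact irrefl a hab

lemma C_sat (form : ι → (L₀[[ι]]).Sentence) {S : (L₀[[ι]]).Theory}
    (h : (S ∪ spo L₀ R ι).IsSatisfiable) :
    (C L₀ R ι form S ∪ spo L₀ R ι).IsSatisfiable := by
  classical
  obtain ⟨M⟩ := h
  -- the strict partial order realized by the model M
  let p : ι → ι → Prop := fun d d' => Sentence.Realize (M : Type _) (ltSent L₀ R ι d d')
  have hirrM : Sentence.Realize (L := L₀[[ι]]) (M : Type _) (Relations.irreflexive (Sum.inl R)) :=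
    Theory.realize_sentence_of_mem (S ∪ spo L₀ R ι)
      (Set.mem_union_right _ (by simp [spo]))
  have htransM : Sentence.Realize (L := L₀[[ι]]) (M : Type _) (Relations.transitive (Sum.inl R)) :=
    Theory.realize_sentence_of_mem (S ∪ spo L₀ R ι)
      (Set.mem_union_right _ (by simp [spo]))
  have hp : IsStrictOrder ι p := ltSent_strictOrder hirrM htransM
  obtain ⟨e, hpe⟩ := exists_linear_ext p hp
  -- `p` is compatible with `S`, witnessed by `M`
  have hcompat : Compatible L₀ R ι p S := by
    have hmod : M ⊨ (S ∪ spo L₀ R ι ∪ {φ | ∃ d d', p d d' ∧ φ = ltSent L₀ R ι d d'} ∪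
        {φ | ∃ d d', ¬p d d' ∧ φ = ∼(ltSent L₀ R ι d d')}) := by
      rw [Theory.model_union_iff, Theory.model_union_iff]
      refine ⟨⟨M.is_model, ?_⟩, ?_⟩
      · rw [Theory.model_iff]
        rintro φ ⟨d, d', hdd, rfl⟩
        exact hdd
      · rw [Theory.model_iff]
        rintro φ ⟨d, d', hdd, rfl⟩
        rw [Sentence.realize_not]
        exact hdd
    exact Theory.Model.isSatisfiable M
  -- hence the extension generated by `e` belongs to `Exts form S`
  have hmem : extension L₀ R ι e form ∈ Exts L₀ R ι form S :=
    ⟨e, p, hp, hcompat, hpe, rfl⟩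
  have hsub : C L₀ R ι form S ⊆ extension L₀ R ι e form :=
    Set.sInter_subset_of_mem hmem
  -- the extension together with SPO is satisfiable
  obtain ⟨N⟩ := base_consistent (R := R) e form
  have hNmod : N ⊨ (extension L₀ R ι e form ∪ spo L₀ R ι) := by
    rw [Theory.model_union_iff]
    refine ⟨⟨fun φ hφ => ?_⟩, ?_⟩
    · exact Theory.ModelsBoundedFormula.realize_sentence hφ N
    · exact N.is_model.mono Set.subset_union_right
  have hext : Theory.IsSatisfiable (extension L₀ R ι e form ∪ spo L₀ R ι) := by
    haveI := hNmod
    exact Theory.Model.isSatisfiable N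
  exact hext.mono (Set.union_subset_union_left _ hsub)

lemma C_mono (form : ι → (L₀[[ι]]).Sentence) : Monotone (C L₀ R ι form) := by
  intro S S' hSS'
  show ⋂₀ Exts L₀ R ι form S ⊆ ⋂₀ Exts L₀ R ι form S'
  intro φ hφ
  rw [Set.mem_sInter] at hφ ⊢
  intro E hE
  apply hφ
  obtain ⟨e, p, h1, h2, h3, h4⟩ := hE
  refine ⟨e, p, h1, ?_, h3, h4⟩
  refine h2.mono ?_
  exact Set.union_subset_union_left _ (Set.union_subset_union_left _
    (Set.union_subset_union_left _ hSS'))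

end Aux

/-- Proposition 3: the set of accepted conclusions is consistent. -/
theorem accepted_consistent (ι : Type) [Fintype ι] (form : ι → (baseLang[[ι]]).Sentence) :
    Theory.IsSatisfiable (lfpC baseLang Rsym ι form ∪ spo baseLang Rsym ι) := by
  classical
  let f : ((baseLang[[ι]]).Theory) →o ((baseLang[[ι]]).Theory) :=
    ⟨C baseLang Rsym ι form, C_mono form⟩
  have hlfp : lfpC baseLang Rsym ι form = f.lfp := rfl
  have key : ∀ a : Ordinal,
      (OrdinalApprox.lfpApprox f ⊥ a ∪ spo baseLang Rsym ι).IsSatisfiable := by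
    intro a
    induction a using Ordinal.induction with
    | h a ih =>
      rw [OrdinalApprox.lfpApprox]
      set g := OrdinalApprox.lfpApprox f ⊥ with hg
      let T : Option {b : Ordinal // b < a} → (baseLang[[ι]]).Theory := fun j =>
        j.elim (spo baseLang Rsym ι) (fun b => f (g b.1) ∪ spo baseLang Rsym ι)
      have hdir : Directed (· ⊆ ·) T := by
        rintro (_ | ⟨b, hb⟩) (_ | ⟨c, hc⟩)
        · exact ⟨none, subset_rfl, subset_rfl⟩
        · exact ⟨some ⟨c, hc⟩, Set.subset_union_right, subset_rfl⟩
        · exact ⟨some ⟨b, hb⟩, subset_rfl, Set.subset_union_right⟩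
        · rcases le_total b c with h | h
          · exact ⟨some ⟨c, hc⟩, Set.union_subset_union_left _
              (f.monotone (OrdinalApprox.lfpApprox_mono_right (f := f) (x := ⊥) h)), subset_rfl⟩
          · exact ⟨some ⟨b, hb⟩, subset_rfl, Set.union_subset_union_left _
              (f.monotone (OrdinalApprox.lfpApprox_mono_right (f := f) (x := ⊥) h))⟩
      have hunion : (⋃ j, T j) =
          ((⊥ ⊔ ⨆ b, ⨆ (_ : b < a), f (g b)) ∪ spo baseLang Rsym ι) := by
        ext φ
        simp only [Set.mem_iUnion, Set.iSup_eq_iUnion, Set.sup_eq_union, Set.bot_eq_empty,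
          Set.empty_union, Set.mem_union, T]
        constructor
        · rintro ⟨(_ | ⟨b, hb⟩), hj⟩
          · exact Or.inr hj
          · rcases hj with hj | hj
            · exact Or.inl ⟨b, hb, hj⟩
            · exact Or.inr hj
        · rintro (⟨b, hb, hφ⟩ | h)
          · exact ⟨some ⟨b, hb⟩, Or.inl hφ⟩
          · exact ⟨none, h⟩
      rw [← hunion, Theory.isSatisfiable_directed_union_iff hdir]
      rintro (_ | ⟨b, hb⟩)
      · exact spo_satisfiable
      · exact C_sat form (ih b hb)
  have := key (Cardinal.ord (Order.succ (Cardinal.mk ((baseLang[[ι]]).Theory))))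
  rwa [OrdinalApprox.lfpApprox_ord_eq_lfp, ← hlfp] at this

end Brevis
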